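/- Let θ > 0 and Ψ_n(j) = n(n−1)⋯(n−j+1)/((n+θ−1)⋯(n+θ−j)). Then ∑_{j=1}^n Ψ_n(j)/j = ∑_{j=1}^n 1/(θ + j − 1). -/

import Mathlib

open Real Filter

/-- `Ψ_n(j) = n(n-1)⋯(n-j+1) / ((n+θ-1)(n+θ-2)⋯(n+θ-j))`. -/
noncomputable def Psi (θ : ℝ) (n j : ℕ) : ℝ :=
  ∏ k ∈ Finset.range j, ((n : ℝ) - k) / (θ + n - k - 1)

lemma psi_succ (θ : ℝ) (n j : ℕ) :
    Psi θ n (j + 1) = Psi θ n j * (((n : ℝ) - j) / (θ + n - j - 1)) := by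
  rw [Psi, Finset.prod_range_succ, Psi]

lemma psi_one (θ : ℝ) (n : ℕ) : Psi θ n 1 = (n : ℝ) / (θ + n - 1) := by
  simp [Psi]

lemma psi_shift (θ : ℝ) (n j : ℕ) :
    Psi θ (n + 1) (j + 1) = ((n : ℝ) + 1) / (θ + n) * Psi θ n j := by
  rw [Psi, Finset.prod_range_succ', Psi, mul_comm]
  congr 1
  · push_cast; ring_nf
  · apply Finset.prod_congr rfl
    intro k _
    push_cast
    ring_nf

lemma lemB (θ : ℝ) (hθ : 0 < θ) (n : ℕ) (hn : 1 ≤ n) :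
    ∀ m, 1 ≤ m → m ≤ n →
    ∑ j ∈ Finset.Icc 1 m, Psi θ n j / j =
      (θ + n - 1) / n * ∑ j ∈ Finset.Icc 2 m, Psi θ n j / ((j : ℝ) - 1)
        + 1 / (θ + n - 1) + Psi θ n m * (((n : ℝ) - m) / (n * m)) := by
  intro m hm
  induction m, hm using Nat.le_induction with
  | base =>
    intro h1n
    have hd : θ + n - 1 ≠ 0 := by
      have : (1 : ℝ) ≤ (n : ℝ) := by exact_mod_cast h1n
      nlinarith
    have hn0 : (n : ℝ) ≠ 0 := by positivity
    simp [psi_one]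
    field_simp
    ring
  | succ m hm ih =>
    intro hmn
    have hmn' : m ≤ n := le_trans (Nat.le_succ m) hmn
    have hm1 : m + 1 ≤ n := hmn
    have h1 : (1:ℝ) ≤ (n:ℝ) := by exact_mod_cast hn
    have hmr : (1:ℝ) ≤ (m:ℝ) := by exact_mod_cast hm
    have hmnr : (m:ℝ) + 1 ≤ (n:ℝ) := by exact_mod_cast hm1
    have hd1 : θ + n - 1 ≠ 0 := by nlinarith
    have hd2 : θ + n - m - 1 ≠ 0 := by nlinarith
    have hn0 : (n : ℝ) ≠ 0 := by positivity
    have hm0 : (m : ℝ) ≠ 0 := by nlinarith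
    have hm10 : (m : ℝ) + 1 ≠ 0 := by nlinarith
    rw [Finset.sum_Icc_succ_top (by omega : 1 ≤ m + 1),
        Finset.sum_Icc_succ_top (by omega : 2 ≤ m + 1), ih hmn']
    rw [psi_succ]
    push_cast
    rw [add_sub_cancel_right]
    field_simp
    ring

theorem psi_div_sum_eq (θ : ℝ) (hθ : 0 < θ) (n : ℕ) (hn : 1 ≤ n) :
    ∑ j ∈ Finset.Icc 1 n, Psi θ n j / j =
      ∑ j ∈ Finset.Icc 1 n, 1 / (θ + (j : ℝ) - 1) := by
  induction n, hn using Nat.le_induction with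
  | base => simp [psi_one, hθ.ne']
  | succ n hn1 ih =>
    have h1 : (1:ℝ) ≤ (n:ℝ) := by exact_mod_cast hn1
    have hθn : θ + n ≠ 0 := by nlinarith
    have hn10 : (n:ℝ) + 1 ≠ 0 := by nlinarith
    -- apply lemB at m = n+1 for parameter n+1
    have hB := lemB θ hθ (n+1) (by omega) (n+1) (by omega) le_rfl
    -- Psi θ (n+1) (n+1) term vanishes
    have hz : Psi θ (n+1) (n+1) * ((((n:ℕ)+1 : ℝ)) - ((n:ℕ)+1 : ℝ)) = 0 := by ring
    -- shift the inner sum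
    have hshift : ∑ j ∈ Finset.Icc 2 (n+1), Psi θ (n+1) j / ((j:ℝ) - 1)
        = ((n:ℝ)+1)/(θ+n) * ∑ j ∈ Finset.Icc 1 n, Psi θ n j / j := by
      rw [Finset.mul_sum]
      rw [show Finset.Icc 2 (n+1) = Finset.map (addLeftEmbedding 1) (Finset.Icc 1 n) by
        rw [Finset.map_add_left_Icc]; (congr 1; omega)]
      rw [Finset.sum_map]
      apply Finset.sum_congr rfl
      intro j hj
      simp only [addLeftEmbedding_apply]
      rw [show 1 + j = j + 1 by ring, psi_shift]
      push_cast
      ring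
    rw [hB, hshift]
    rw [Finset.sum_Icc_succ_top (by omega : 1 ≤ n + 1)]
    rw [← ih]
    push_cast
    have hpz : Psi θ (n+1) (n+1) * ((((n:ℝ)+1) - ((n:ℝ)+1)) / (((n:ℝ)+1) * ((n:ℝ)+1))) = 0 := by
      rw [show (((n:ℝ)+1) - ((n:ℝ)+1)) = 0 by ring]
      simp
    rw [hpz]
    rw [show θ + ((n:ℝ) + 1) - 1 = θ + n by ring]
    field_simp
    ring
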